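/- Let m = 2, U = {(1,2)}, θ ∈ ℝ, and let p(x₁, x₂|θ) = det D²ψ(x₁, x₂|θ) where ψ(x|θ) = (x₁² + x₂²)/2 − (θ/π²) cos(πx₁)cos(2πx₂). Then for every x₁ ∈ [0,1], ∫_0^1 x₂ p(x₁, x₂|θ) dx₂ = (1/2) ∫_0^1 p(x₁, x₂|θ) dx₂ = (1/2)(1 + 2θ² cos(2πx₁)). In particular, the conditional mean of X₂ given X₁ = x₁ is exactly 1/2 for all x₁. -/

import Mathlib

open Real intervalIntegral

/-- The potential ψ(x|θ) of SGM with m = 2 and U = {(1,2)}. -/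
noncomputable def heteroPotential (θ : ℝ) (x : Fin 2 → ℝ) : ℝ :=
  (x 0 ^ 2 + x 1 ^ 2) / 2 -
    (θ / Real.pi ^ 2) * Real.cos (Real.pi * x 0) * Real.cos (2 * Real.pi * x 1)

/-- The Hessian matrix D²f(x). -/
noncomputable def hessian2 (f : (Fin 2 → ℝ) → ℝ) (x : Fin 2 → ℝ) :
    Matrix (Fin 2) (Fin 2) ℝ :=
  Matrix.of fun i j => fderiv ℝ (fun y => fderiv ℝ f y (Pi.single j 1)) x (Pi.single i 1)

/-- The density p(x₁,x₂|θ) = det D²ψ(x₁,x₂|θ) of SGM with m = 2, U = {(1,2)}. -/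
noncomputable def heteroDensity (θ x₁ x₂ : ℝ) : ℝ :=
  (hessian2 (heteroPotential θ) ![x₁, x₂]).det

lemma fderiv_hp_apply (θ : ℝ) (y v : Fin 2 → ℝ) :
    fderiv ℝ (heteroPotential θ) y v =
      (y 0 + θ / Real.pi * Real.sin (Real.pi * y 0) * Real.cos (2 * Real.pi * y 1)) * v 0 +
      (y 1 + 2 * θ / Real.pi * Real.cos (Real.pi * y 0) * Real.sin (2 * Real.pi * y 1)) * v 1 := by
  have h0 : HasFDerivAt (fun y : Fin 2 → ℝ => y 0)
      (ContinuousLinearMap.proj 0 : (Fin 2 → ℝ) →L[ℝ] ℝ) y :=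
    (ContinuousLinearMap.proj 0 : (Fin 2 → ℝ) →L[ℝ] ℝ).hasFDerivAt
  have h1 : HasFDerivAt (fun y : Fin 2 → ℝ => y 1)
      (ContinuousLinearMap.proj 1 : (Fin 2 → ℝ) →L[ℝ] ℝ) y :=
    (ContinuousLinearMap.proj 1 : (Fin 2 → ℝ) →L[ℝ] ℝ).hasFDerivAt
  have hsq0 : HasFDerivAt (fun y : Fin 2 → ℝ => y 0 ^ 2)
      ((2 * y 0) • (ContinuousLinearMap.proj 0 : (Fin 2 → ℝ) →L[ℝ] ℝ)) y := by
    simpa [Function.comp_def] using (hasDerivAt_pow 2 (y 0)).comp_hasFDerivAt y h0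
  have hsq1 : HasFDerivAt (fun y : Fin 2 → ℝ => y 1 ^ 2)
      ((2 * y 1) • (ContinuousLinearMap.proj 1 : (Fin 2 → ℝ) →L[ℝ] ℝ)) y := by
    simpa [Function.comp_def] using (hasDerivAt_pow 2 (y 1)).comp_hasFDerivAt y h1
  have hc0 := (h0.const_mul Real.pi).cos
  have hc1 := (h1.const_mul (2 * Real.pi)).cos
  have hψ := ((hsq0.add hsq1).const_mul ((1:ℝ)/2)).sub
    ((hc0.const_mul (θ / Real.pi ^ 2)).mul hc1)
  have hfun : heteroPotential θ = fun y : Fin 2 → ℝ =>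
      (1/2 : ℝ) * (y 0 ^ 2 + y 1 ^ 2) -
        (θ / Real.pi ^ 2) * Real.cos (Real.pi * y 0) * Real.cos (2 * Real.pi * y 1) := by
    funext z; simp only [heteroPotential]; ring
  rw [hfun]; erw [hψ.fderiv]
  simp only [ContinuousLinearMap.sub_apply, ContinuousLinearMap.add_apply,
    ContinuousLinearMap.smul_apply, ContinuousLinearMap.coe_smul', Pi.smul_apply,
    ContinuousLinearMap.proj_apply, smul_eq_mul]
  have hπ := Real.pi_ne_zero
  field_simp
  ring

lemma fderiv_g0_apply (θ : ℝ) (x v : Fin 2 → ℝ) :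
    fderiv ℝ (fun y : Fin 2 → ℝ =>
        y 0 + θ / Real.pi * Real.sin (Real.pi * y 0) * Real.cos (2 * Real.pi * y 1)) x v =
      (1 + θ * Real.cos (Real.pi * x 0) * Real.cos (2 * Real.pi * x 1)) * v 0 +
      (-2 * θ * Real.sin (Real.pi * x 0) * Real.sin (2 * Real.pi * x 1)) * v 1 := by
  have h0 : HasFDerivAt (fun y : Fin 2 → ℝ => y 0)
      (ContinuousLinearMap.proj 0 : (Fin 2 → ℝ) →L[ℝ] ℝ) x :=
    (ContinuousLinearMap.proj 0 : (Fin 2 → ℝ) →L[ℝ] ℝ).hasFDerivAt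
  have h1 : HasFDerivAt (fun y : Fin 2 → ℝ => y 1)
      (ContinuousLinearMap.proj 1 : (Fin 2 → ℝ) →L[ℝ] ℝ) x :=
    (ContinuousLinearMap.proj 1 : (Fin 2 → ℝ) →L[ℝ] ℝ).hasFDerivAt
  have hψ := h0.add ((((h0.const_mul Real.pi).sin).const_mul (θ / Real.pi)).mul
    (h1.const_mul (2 * Real.pi)).cos)
  erw [hψ.fderiv]
  simp only [ContinuousLinearMap.add_apply, ContinuousLinearMap.smul_apply,
    ContinuousLinearMap.coe_smul', Pi.smul_apply, ContinuousLinearMap.proj_apply, smul_eq_mul]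
  have hπ := Real.pi_ne_zero
  field_simp
  ring

lemma fderiv_g1_apply (θ : ℝ) (x v : Fin 2 → ℝ) :
    fderiv ℝ (fun y : Fin 2 → ℝ =>
        y 1 + 2 * θ / Real.pi * Real.cos (Real.pi * y 0) * Real.sin (2 * Real.pi * y 1)) x v =
      (-2 * θ * Real.sin (Real.pi * x 0) * Real.sin (2 * Real.pi * x 1)) * v 0 +
      (1 + 4 * θ * Real.cos (Real.pi * x 0) * Real.cos (2 * Real.pi * x 1)) * v 1 := by
  have h0 : HasFDerivAt (fun y : Fin 2 → ℝ => y 0)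
      (ContinuousLinearMap.proj 0 : (Fin 2 → ℝ) →L[ℝ] ℝ) x :=
    (ContinuousLinearMap.proj 0 : (Fin 2 → ℝ) →L[ℝ] ℝ).hasFDerivAt
  have h1 : HasFDerivAt (fun y : Fin 2 → ℝ => y 1)
      (ContinuousLinearMap.proj 1 : (Fin 2 → ℝ) →L[ℝ] ℝ) x :=
    (ContinuousLinearMap.proj 1 : (Fin 2 → ℝ) →L[ℝ] ℝ).hasFDerivAt
  have hψ := h1.add ((((h0.const_mul Real.pi).cos).const_mul (2 * θ / Real.pi)).mul
    (h1.const_mul (2 * Real.pi)).sin)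
  erw [hψ.fderiv]
  simp only [ContinuousLinearMap.add_apply, ContinuousLinearMap.smul_apply,
    ContinuousLinearMap.coe_smul', Pi.smul_apply, ContinuousLinearMap.proj_apply, smul_eq_mul]
  have hπ := Real.pi_ne_zero
  field_simp
  ring

lemma heteroDensity_eq (θ x₁ x₂ : ℝ) :
    heteroDensity θ x₁ x₂ =
      (1 + 2 * θ ^ 2 * Real.cos (2 * Real.pi * x₁)) +
        5 * θ * Real.cos (Real.pi * x₁) * Real.cos (2 * Real.pi * x₂) +
        2 * θ ^ 2 * Real.cos (4 * Real.pi * x₂) := by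
  have e0 : (fun y : Fin 2 → ℝ => fderiv ℝ (heteroPotential θ) y (Pi.single 0 1)) =
      fun y : Fin 2 → ℝ =>
        y 0 + θ / Real.pi * Real.sin (Real.pi * y 0) * Real.cos (2 * Real.pi * y 1) := by
    funext y
    rw [fderiv_hp_apply]
    norm_num [Pi.single_apply]
  have e1 : (fun y : Fin 2 → ℝ => fderiv ℝ (heteroPotential θ) y (Pi.single 1 1)) =
      fun y : Fin 2 → ℝ =>
        y 1 + 2 * θ / Real.pi * Real.cos (Real.pi * y 0) * Real.sin (2 * Real.pi * y 1) := by
    funext y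
    rw [fderiv_hp_apply]
    norm_num [Pi.single_apply]
  have hx0 : (![x₁, x₂] : Fin 2 → ℝ) 0 = x₁ := rfl
  have hx1 : (![x₁, x₂] : Fin 2 → ℝ) 1 = x₂ := rfl
  have h3 : Real.cos (2 * Real.pi * x₁) = 2 * Real.cos (Real.pi * x₁) ^ 2 - 1 := by
    rw [show (2 * Real.pi * x₁ : ℝ) = 2 * (Real.pi * x₁) by ring, Real.cos_two_mul]
  have h4 : Real.cos (4 * Real.pi * x₂) = 2 * Real.cos (2 * Real.pi * x₂) ^ 2 - 1 := by
    rw [show (4 * Real.pi * x₂ : ℝ) = 2 * (2 * Real.pi * x₂) by ring, Real.cos_two_mul]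
  have h1 : Real.sin (Real.pi * x₁) ^ 2 = 1 - Real.cos (Real.pi * x₁) ^ 2 := Real.sin_sq _
  have h2 : Real.sin (2 * Real.pi * x₂) ^ 2 = 1 - Real.cos (2 * Real.pi * x₂) ^ 2 :=
    Real.sin_sq _
  simp only [heteroDensity, hessian2, Matrix.det_fin_two, Matrix.of_apply, e0, e1,
    fderiv_g0_apply, fderiv_g1_apply, hx0, hx1]
  norm_num [Pi.single_apply]
  linear_combination (-2) * θ ^ 2 * h3 + (-2) * θ ^ 2 * h4 +
    (-4 * θ ^ 2 * Real.sin (2 * Real.pi * x₂) ^ 2) * h1 +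
    (-4 * θ ^ 2 * (1 - Real.cos (Real.pi * x₁) ^ 2)) * h2

lemma sin_four_pi : Real.sin (4 * Real.pi) = 0 := by
  have h := Real.sin_int_mul_pi (4 : ℤ)
  push_cast at h
  simpa using h

lemma integral_density (θ x₁ : ℝ) :
    (∫ x₂ in (0 : ℝ)..1, heteroDensity θ x₁ x₂)
      = 1 + 2 * θ ^ 2 * Real.cos (2 * Real.pi * x₁) := by
  set A : ℝ := 1 + 2 * θ ^ 2 * Real.cos (2 * Real.pi * x₁) with hA
  set B : ℝ := 5 * θ * Real.cos (Real.pi * x₁) with hB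
  set C : ℝ := 2 * θ ^ 2 with hC
  have hπ := Real.pi_ne_zero
  have hfun : (fun x₂ => heteroDensity θ x₁ x₂) =
      fun t => A + B * Real.cos (2 * Real.pi * t) + C * Real.cos (4 * Real.pi * t) :=
    funext fun t => heteroDensity_eq θ x₁ t
  have hF : ∀ x ∈ Set.uIcc (0:ℝ) 1, HasDerivAt
      (fun t => A * t + B * (Real.sin (2 * Real.pi * t) / (2 * Real.pi))
        + C * (Real.sin (4 * Real.pi * t) / (4 * Real.pi)))
      (heteroDensity θ x₁ x) x := by
    intro x _
    rw [heteroDensity_eq θ x₁ x]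
    have h2 : HasDerivAt (fun t : ℝ => 2 * Real.pi * t) (2 * Real.pi) x := by
      simpa using (hasDerivAt_id x).const_mul (2 * Real.pi)
    have h4 : HasDerivAt (fun t : ℝ => 4 * Real.pi * t) (4 * Real.pi) x := by
      simpa using (hasDerivAt_id x).const_mul (4 * Real.pi)
    have h := (((hasDerivAt_id x).const_mul A).add
        (((h2.sin).div_const (2 * Real.pi)).const_mul B)).add
        (((h4.sin).div_const (4 * Real.pi)).const_mul C)
    refine h.congr_deriv ?_
    field_simp
    try ring
  have hInt : IntervalIntegrable (fun x₂ => heteroDensity θ x₁ x₂)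
      MeasureTheory.volume 0 1 := by
    rw [hfun]
    exact (Continuous.intervalIntegrable (by fun_prop) 0 1)
  have key := intervalIntegral.integral_eq_sub_of_hasDerivAt hF hInt
  rw [key]
  norm_num [Real.sin_two_pi, sin_four_pi]

lemma integral_x_density (θ x₁ : ℝ) :
    (∫ x₂ in (0 : ℝ)..1, x₂ * heteroDensity θ x₁ x₂)
      = (1 + 2 * θ ^ 2 * Real.cos (2 * Real.pi * x₁)) / 2 := by
  set A : ℝ := 1 + 2 * θ ^ 2 * Real.cos (2 * Real.pi * x₁) with hA
  set B : ℝ := 5 * θ * Real.cos (Real.pi * x₁) with hB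
  set C : ℝ := 2 * θ ^ 2 with hC
  have hπ := Real.pi_ne_zero
  have hfun : (fun x₂ => x₂ * heteroDensity θ x₁ x₂) =
      fun t => t * (A + B * Real.cos (2 * Real.pi * t) + C * Real.cos (4 * Real.pi * t)) :=
    funext fun t => by rw [heteroDensity_eq θ x₁ t]
  have hF : ∀ x ∈ Set.uIcc (0:ℝ) 1, HasDerivAt
      (fun t => A * (t ^ 2 / 2)
        + B * (t * Real.sin (2 * Real.pi * t) / (2 * Real.pi)
            + Real.cos (2 * Real.pi * t) / (2 * Real.pi) ^ 2)
        + C * (t * Real.sin (4 * Real.pi * t) / (4 * Real.pi)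
            + Real.cos (4 * Real.pi * t) / (4 * Real.pi) ^ 2))
      (x * heteroDensity θ x₁ x) x := by
    intro x _
    rw [heteroDensity_eq θ x₁ x]
    have h2 : HasDerivAt (fun t : ℝ => 2 * Real.pi * t) (2 * Real.pi) x := by
      simpa using (hasDerivAt_id x).const_mul (2 * Real.pi)
    have h4 : HasDerivAt (fun t : ℝ => 4 * Real.pi * t) (4 * Real.pi) x := by
      simpa using (hasDerivAt_id x).const_mul (4 * Real.pi)
    have h := (((hasDerivAt_pow 2 x).div_const 2).const_mul A).add
        (((((hasDerivAt_id x).mul h2.sin).div_const (2 * Real.pi)).add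
          ((h2.cos).div_const ((2 * Real.pi) ^ 2))).const_mul B)
    have h' := h.add
        (((((hasDerivAt_id x).mul h4.sin).div_const (4 * Real.pi)).add
          ((h4.cos).div_const ((4 * Real.pi) ^ 2))).const_mul C)
    refine h'.congr_deriv ?_
    simp only [id_eq, hA, hB, hC]
    field_simp
    ring
  have hInt : IntervalIntegrable (fun x₂ => x₂ * heteroDensity θ x₁ x₂)
      MeasureTheory.volume 0 1 := by
    rw [hfun]
    exact (Continuous.intervalIntegrable (by fun_prop) 0 1)
  have key := intervalIntegral.integral_eq_sub_of_hasDerivAt hF hInt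
  rw [key]
  rw [hA]
  norm_num [Real.sin_two_pi, sin_four_pi, Real.cos_two_pi]
  have c4 : Real.cos (4 * Real.pi) = 1 := by
    have := Real.cos_int_mul_two_pi (2 : ℤ)
    push_cast at this
    rw [show (4:ℝ) * Real.pi = 2 * (2 * Real.pi) by ring]
    simpa using this
  rw [c4]
  field_simp
  ring

/-- The conditional mean of X₂ given X₁ = x₁ is exactly 1/2:
∫₀¹ x₂ p(x₁,x₂|θ) dx₂ = (1/2) ∫₀¹ p(x₁,x₂|θ) dx₂ = (1/2)(1 + 2θ²cos(2πx₁)). -/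
theorem sgm_heteroscedastic_conditional_mean (θ : ℝ) (x₁ : ℝ)
    (hx₁ : x₁ ∈ Set.Icc (0 : ℝ) 1) :
    (∫ x₂ in (0 : ℝ)..1, x₂ * heteroDensity θ x₁ x₂)
        = (1 / 2) * ∫ x₂ in (0 : ℝ)..1, heteroDensity θ x₁ x₂ ∧
      (∫ x₂ in (0 : ℝ)..1, heteroDensity θ x₁ x₂)
        = 1 + 2 * θ ^ 2 * Real.cos (2 * Real.pi * x₁) := by
  refine ⟨?_, integral_density θ x₁⟩
  rw [integral_x_density θ x₁, integral_density θ x₁]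
  ring
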